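/- For any positive integers k and v, the constraint x_1 + x_2 + ... + x_{k-1} + (1/v)·x_k ≥ 1 is k-roundable: for every nonnegative real vector x ∈ ℝ_{≥0}^k, if Σ_{i=1}^{k-1} x_i + (1/v)x_k ≥ 1 then Σ_{i=1}^{k-1} ⌊k·x_i⌋ + (1/v)⌊k·x_k⌋ ≥ 1. -/

import Mathlib

theorem stmt_1 (k v : ℕ) (hk : 0 < k) (hv : 0 < v) (x : ℕ → ℝ)
    (hx : ∀ i, 0 ≤ x i)
    (h : 1 ≤ ∑ i ∈ Finset.Icc 1 (k - 1), x i + (1 / (v : ℝ)) * x k) :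
    1 ≤ ∑ i ∈ Finset.Icc 1 (k - 1), (⌊(k : ℝ) * x i⌋ : ℝ)
        + (1 / (v : ℝ)) * (⌊(k : ℝ) * x k⌋ : ℝ) := by
  set N : ℤ := ∑ i ∈ Finset.Icc 1 (k - 1), ⌊(k : ℝ) * x i⌋ with hN
  set M : ℤ := ⌊(k : ℝ) * x k⌋ with hM
  have hvR : (0 : ℝ) < v := by exact_mod_cast hv
  have hcast : ∑ i ∈ Finset.Icc 1 (k - 1), (⌊(k : ℝ) * x i⌋ : ℝ) = (N : ℝ) := by
    rw [hN]; push_cast; ring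
  rw [hcast]
  -- strict lower bound
  have hcard : (Finset.Icc 1 (k - 1)).card = k - 1 := by
    rw [Nat.card_Icc]; omega
  have hsum_le : ∑ i ∈ Finset.Icc 1 (k - 1), ((k : ℝ) * x i - 1)
      ≤ (N : ℝ) := by
    rw [hN]; push_cast
    exact Finset.sum_le_sum fun i _ => le_of_lt (Int.sub_one_lt_floor _)
  have hlast : (1 / (v : ℝ)) * ((k : ℝ) * x k - 1) < (1 / (v : ℝ)) * (M : ℝ) := by
    apply mul_lt_mul_of_pos_left (Int.sub_one_lt_floor _)
    positivity
  have hexp : ∑ i ∈ Finset.Icc 1 (k - 1), ((k : ℝ) * x i - 1)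
      = (k : ℝ) * ∑ i ∈ Finset.Icc 1 (k - 1), x i - ((k : ℝ) - 1) := by
    rw [Finset.sum_sub_distrib, Finset.sum_const, hcard, ← Finset.mul_sum]
    have h1 : ((k - 1 : ℕ) : ℝ) = (k : ℝ) - 1 := by
      have : 1 ≤ k := hk
      push_cast [this]; ring
    rw [nsmul_eq_mul, h1]; ring
  have hstrict : (1 : ℝ) - 1 / v < (N : ℝ) + (1 / (v : ℝ)) * (M : ℝ) := by
    have h1 : (k : ℝ) * (∑ i ∈ Finset.Icc 1 (k - 1), x i + (1 / (v : ℝ)) * x k)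
        - ((k : ℝ) - 1) - 1 / v < (N : ℝ) + (1 / (v : ℝ)) * (M : ℝ) := by
      have := add_lt_add_of_le_of_lt hsum_le hlast
      rw [hexp] at this
      calc (k : ℝ) * (∑ i ∈ Finset.Icc 1 (k - 1), x i + (1 / (v : ℝ)) * x k)
          - ((k : ℝ) - 1) - 1 / v
          = ((k : ℝ) * ∑ i ∈ Finset.Icc 1 (k - 1), x i - ((k : ℝ) - 1))
            + (1 / (v : ℝ)) * ((k : ℝ) * x k - 1) := by field_simp; ring
        _ < _ := this
    have h2 : (1 : ℝ) - 1 / v ≤ (k : ℝ) * (∑ i ∈ Finset.Icc 1 (k - 1), x i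
        + (1 / (v : ℝ)) * x k) - ((k : ℝ) - 1) - 1 / v := by
      have hkR : (1 : ℝ) ≤ (k : ℝ) := by exact_mod_cast hk
      nlinarith
    linarith
  -- integrality step
  have hZ : (v : ℤ) - 1 < (v : ℤ) * N + M := by
    have : ((v : ℝ)) - 1 < (v : ℝ) * (N : ℝ) + (M : ℝ) := by
      have := mul_lt_mul_of_pos_left hstrict hvR
      have hv0 : (v : ℝ) ≠ 0 := ne_of_gt hvR
      field_simp at this
      linarith
    exact_mod_cast this
  have hZ' : (v : ℤ) ≤ (v : ℤ) * N + M := by omega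
  have : (v : ℝ) ≤ (v : ℝ) * (N : ℝ) + (M : ℝ) := by exact_mod_cast hZ'
  have h3 : ((v : ℝ) * (N : ℝ) + (M : ℝ)) / v = (N : ℝ) + (1 / (v : ℝ)) * (M : ℝ) := by
    field_simp
  rw [← h3, le_div_iff₀ hvR]
  linarith
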